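/- Composition of copyless monotone register updates is well-defined: if σ ∈ CMR(k, ℓ) and σ′ ∈ CMR(n, k), then the tuple obtained from σ by substituting each register index i < k by the i-th component of σ′ lies in CMR(n, ℓ), i.e. is again copyless and monotone. Moreover this composition is associative with the identity update (0, 1, …, n−1) as unit. -/

import Mathlib

/-!
STATEMENT 17: Composition of copyless monotone register updates (by substituting register
indices) is well-defined (copyless and monotone again), associative, and has the identity
update `(0, 1, …, n−1)` as unit.
-/

/-- An update from `n` registers to `k` registers: a `k`-tuple of words over `Γ ⊕ Fin n`. -/
abbrev Update (Γ : Type) (n k : ℕ) := Fin k → List (Γ ⊕ Fin n)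

/-- Copylessness: every register index occurs at most once in the whole tuple. -/
def Copyless {Γ : Type} [DecidableEq Γ] {n k : ℕ} (w : Update Γ n k) : Prop :=
  ∀ i : Fin n, (∑ ℓ : Fin k, (w ℓ).count (Sum.inr i)) ≤ 1

/-- Monotonicity: if `i ≤ j` occur in components `ℓi`, `ℓj` respectively, then either
`ℓi < ℓj`, or `ℓi = ℓj` and the occurrence of `i` precedes that of `j`. -/
def MonotoneUpd {Γ : Type} [DecidableEq Γ] {n k : ℕ} (w : Update Γ n k) : Prop :=
  ∀ i j : Fin n, i ≤ j → ∀ ℓi ℓj : Fin k,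
    Sum.inr i ∈ w ℓi → Sum.inr j ∈ w ℓj →
      (ℓi < ℓj ∨ (ℓi = ℓj ∧ (w ℓi).idxOf (Sum.inr i) ≤ (w ℓj).idxOf (Sum.inr j)))

/-- Copyless monotone register updates. -/
def IsCMR {Γ : Type} [DecidableEq Γ] {n k : ℕ} (w : Update Γ n k) : Prop :=
  Copyless w ∧ MonotoneUpd w

/-- Composition: substitute each register index `i` occurring in `σ` by the `i`-th
component of `σ'`. -/
def compU {Γ : Type} {n k l : ℕ} (σ : Update Γ k l) (σ' : Update Γ n k) : Update Γ n l :=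
  fun j => (σ j).flatMap (fun x => match x with
    | Sum.inl a => [Sum.inl a]
    | Sum.inr i => σ' i)

/-- The identity update `(0, 1, …, n−1)`. -/
def idU (Γ : Type) (n : ℕ) : Update Γ n n := fun i => [Sum.inr i]


private instance sumLawfulBEq {α β : Type*} [BEq α] [BEq β] [LawfulBEq α] [LawfulBEq β] :
    LawfulBEq (α ⊕ β) where
  eq_of_beq {a b} h := by
    cases a <;> cases b <;>
      first
        | (exact congrArg _ (eq_of_beq h))
        | exact Bool.noConfusion h
  rfl {a} := by
    cases a with
    | inl x => show (x == x) = true; exact BEq.rfl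
    | inr x => show (x == x) = true; exact BEq.rfl

private lemma beq_unique {α : Type} (b1 b2 : BEq α)
    (h1 : @LawfulBEq α b1) (h2 : @LawfulBEq α b2) : b1 = b2 := by
  have key : ∀ x y : α, (@BEq.beq α b1 x y) = (@BEq.beq α b2 x y) := by
    intro x y
    by_cases h : x = y
    · subst h
      rw [@beq_self_eq_true α b1 (@LawfulBEq.toReflBEq α b1 h1) x, @beq_self_eq_true α b2 (@LawfulBEq.toReflBEq α b2 h2) x]
    · rw [@beq_false_of_ne α b1 h1 _ _ h, @beq_false_of_ne α b2 h2 _ _ h]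
  cases b1; cases b2
  congr 1
  funext x y
  exact key x y

/-- The expansion function used in `compU'`. -/
private def expand {Γ : Type} {n k : ℕ} (σ' : Fin k → List (Γ ⊕ Fin n)) :
    Γ ⊕ Fin k → List (Γ ⊕ Fin n) :=
  fun x => match x with
    | Sum.inl a => [Sum.inl a]
    | Sum.inr i => σ' i

private lemma mem_expand {Γ : Type} {n k : ℕ} {σ' : Fin k → List (Γ ⊕ Fin n)}
    {i : Fin n} {x : Γ ⊕ Fin k} (h : Sum.inr i ∈ expand σ' x) :
    ∃ p, x = Sum.inr p ∧ Sum.inr i ∈ σ' p := by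
  cases x with
  | inl a => simp [expand] at h
  | inr p => exact ⟨p, rfl, h⟩

private lemma count_expand {Γ : Type} [DecidableEq Γ] {n k : ℕ}
    (σ' : Fin k → List (Γ ⊕ Fin n)) (i : Fin n) (l : List (Γ ⊕ Fin k)) :
    ((l.flatMap (expand σ')).count (Sum.inr i))
      = ∑ p : Fin k, l.count (Sum.inr p) * (σ' p).count (Sum.inr i) := by
  induction l with
  | nil => simp
  | cons x t ih =>
    rw [List.flatMap_cons, List.count_append, ih]
    cases x with
    | inl a =>
      rw [show (expand σ' (Sum.inl a)) = [Sum.inl a] from rfl,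
        List.count_eq_zero_of_not_mem (by simp)]
      have hs : (∑ p : Fin k, ((Sum.inl a :: t : List (Γ ⊕ Fin k)).count (Sum.inr p))
            * (σ' p).count (Sum.inr i))
          = ∑ p : Fin k, (t.count (Sum.inr p)) * (σ' p).count (Sum.inr i) :=
        Finset.sum_congr rfl (fun p _ => by rw [List.count_cons_of_ne (by simp)])
      rw [hs]
      omega
    | inr p0 =>
      rw [show (expand σ' (Sum.inr p0)) = σ' p0 from rfl]
      have key : ∀ p : Fin k, ((Sum.inr p0 :: t).count (Sum.inr p)) * (σ' p).count (Sum.inr i)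
          = (t.count (Sum.inr p)) * (σ' p).count (Sum.inr i)
            + (if p = p0 then (σ' p).count (Sum.inr i) else 0) := by
        intro p
        by_cases h : p = p0
        · subst h
          rw [List.count_cons_self, if_pos rfl]
          ring
        · rw [List.count_cons_of_ne (by simpa using Ne.symm h), if_neg h, add_zero]
      have hs : (∑ p : Fin k, ((Sum.inr p0 :: t : List (Γ ⊕ Fin k)).count (Sum.inr p))
            * (σ' p).count (Sum.inr i))
          = ∑ p : Fin k, ((t.count (Sum.inr p)) * (σ' p).count (Sum.inr i)
            + (if p = p0 then (σ' p).count (Sum.inr i) else 0)) :=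
        Finset.sum_congr rfl (fun p _ => key p)
      rw [hs, Finset.sum_add_distrib, Finset.sum_ite_eq' Finset.univ p0]
      simp
      omega

private lemma idxOf_flatMap_le {β γ : Type} [DecidableEq β] [DecidableEq γ]
    (g : γ → List β) (bi bj : β) :
    ∀ (l : List γ), (l.flatMap g).count bi ≤ 1 → (l.flatMap g).count bj ≤ 1 →
    ∀ x y, x ∈ l → y ∈ l → bi ∈ g x → bj ∈ g y →
    (l.idxOf x < l.idxOf y ∨ (x = y ∧ (g x).idxOf bi ≤ (g y).idxOf bj)) →
    (l.flatMap g).idxOf bi ≤ (l.flatMap g).idxOf bj := by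
  intro l
  induction l with
  | nil => intro _ _ x y hx; simp at hx
  | cons a t ih =>
    intro hci hcj x y hx hy hbix hbjy hdisj
    rw [List.flatMap_cons] at *
    by_cases hbi : bi ∈ g a
    · by_cases hbj : bj ∈ g a
      · -- both in g a; then x = a and y = a
        have hxa : x = a := by
          by_contra hne
          have hxt : x ∈ t := by rcases List.mem_cons.mp hx with h | h; exact absurd h hne; exact h
          have h1 : bi ∈ t.flatMap g := List.mem_flatMap.mpr ⟨x, hxt, hbix⟩
          have := List.count_append (a := bi) (l₁ := g a) (l₂ := t.flatMap g)
          have hc1 : 1 ≤ (g a).count bi := List.count_pos_iff.mpr hbi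
          have hc2 : 1 ≤ (t.flatMap g).count bi := List.count_pos_iff.mpr h1
          omega
        have hya : y = a := by
          by_contra hne
          have hyt : y ∈ t := by rcases List.mem_cons.mp hy with h | h; exact absurd h hne; exact h
          have h1 : bj ∈ t.flatMap g := List.mem_flatMap.mpr ⟨y, hyt, hbjy⟩
          have := List.count_append (a := bj) (l₁ := g a) (l₂ := t.flatMap g)
          have hc1 : 1 ≤ (g a).count bj := List.count_pos_iff.mpr hbj
          have hc2 : 1 ≤ (t.flatMap g).count bj := List.count_pos_iff.mpr h1
          omega
        subst hxa; subst hya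
        rcases hdisj with h | ⟨_, h⟩
        · omega
        · rw [List.idxOf_append_of_mem hbi, List.idxOf_append_of_mem hbj]
          exact h
      · -- bi in g a, bj not
        rw [List.idxOf_append_of_mem hbi, List.idxOf_append_of_notMem hbj]
        have := List.idxOf_lt_length_iff.mpr hbi
        omega
    · by_cases hbj : bj ∈ g a
      · -- contradiction
        exfalso
        have hya : y = a := by
          by_contra hne
          have hyt : y ∈ t := by rcases List.mem_cons.mp hy with h | h; exact absurd h hne; exact h
          have h1 : bj ∈ t.flatMap g := List.mem_flatMap.mpr ⟨y, hyt, hbjy⟩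
          have := List.count_append (a := bj) (l₁ := g a) (l₂ := t.flatMap g)
          have hc1 : 1 ≤ (g a).count bj := List.count_pos_iff.mpr hbj
          have hc2 : 1 ≤ (t.flatMap g).count bj := List.count_pos_iff.mpr h1
          omega
        have hxna : x ≠ a := fun h => hbi (h ▸ hbix)
        rcases hdisj with h | ⟨h, _⟩
        · rw [List.idxOf_cons_ne t (Ne.symm hxna), hya, List.idxOf_cons_self] at h
          omega
        · exact hxna (h.trans hya)
      · -- neither in g a : recurse
        have hxna : x ≠ a := fun h => hbi (h ▸ hbix)
        have hyna : y ≠ a := fun h => hbj (h ▸ hbjy)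
        have hxt : x ∈ t := by rcases List.mem_cons.mp hx with h | h; exact absurd h hxna; exact h
        have hyt : y ∈ t := by rcases List.mem_cons.mp hy with h | h; exact absurd h hyna; exact h
        have hci' : (t.flatMap g).count bi ≤ 1 := by
          have := List.count_append (a := bi) (l₁ := g a) (l₂ := t.flatMap g); omega
        have hcj' : (t.flatMap g).count bj ≤ 1 := by
          have := List.count_append (a := bj) (l₁ := g a) (l₂ := t.flatMap g); omega
        have hdisj' : t.idxOf x < t.idxOf y ∨ (x = y ∧ (g x).idxOf bi ≤ (g y).idxOf bj) := by
          rcases hdisj with h | h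
          · left
            rw [List.idxOf_cons_ne t (Ne.symm hxna), List.idxOf_cons_ne t (Ne.symm hyna)] at h
            omega
          · right; exact h
        rw [List.idxOf_append_of_notMem hbi, List.idxOf_append_of_notMem hbj]
        have := ih hci' hcj' x y hxt hyt hbix hbjy hdisj'
        omega

theorem cmr_comp_wellDefined_assoc_unit {Γ : Type} [DecidableEq Γ]
    {n k l m : ℕ}
    (σ : Update Γ k l) (σ' : Update Γ n k)
    (hσ : IsCMR σ) (hσ' : IsCMR σ') :
    IsCMR (compU σ σ') ∧
    (∀ (τ : Update Γ m l) (τ' : Update Γ k m) (τ'' : Update Γ n k),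
        compU (compU τ τ') τ'' = compU τ (compU τ' τ'')) ∧
    compU σ (idU Γ k) = σ ∧
    compU (idU Γ l) σ = σ := by
  obtain ⟨hσc, hσm⟩ := hσ
  obtain ⟨hσ'c, hσ'm⟩ := hσ'
  have e1 : (Sum.instBEq : BEq (Γ ⊕ Fin n)) = instBEqOfDecidableEq :=
    beq_unique _ _ inferInstance inferInstance
  have e2 : (Sum.instBEq : BEq (Γ ⊕ Fin k)) = instBEqOfDecidableEq :=
    beq_unique _ _ inferInstance inferInstance
  have hcompU : ∀ j, compU σ σ' j = (σ j).flatMap (expand σ') := fun j => rfl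
  -- copylessness of the composition
  have hcl : Copyless (compU σ σ') := by
    intro i
    have h1 : ∀ ℓ : Fin l, (compU σ σ' ℓ).count (Sum.inr i)
        = ∑ p : Fin k, (σ ℓ).count (Sum.inr p) * (σ' p).count (Sum.inr i) := by
      intro ℓ
      have hc := count_expand σ' i (σ ℓ)
      rw [hcompU]
      exact hc
    calc (∑ ℓ : Fin l, (compU σ σ' ℓ).count (Sum.inr i))
        = ∑ ℓ : Fin l, ∑ p : Fin k, (σ ℓ).count (Sum.inr p) * (σ' p).count (Sum.inr i) :=
          Finset.sum_congr rfl (fun ℓ _ => h1 ℓ)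
      _ = ∑ p : Fin k, (∑ ℓ : Fin l, (σ ℓ).count (Sum.inr p)) * (σ' p).count (Sum.inr i) := by
          rw [Finset.sum_comm]
          exact Finset.sum_congr rfl (fun p _ => (Finset.sum_mul _ _ _).symm)
      _ ≤ ∑ p : Fin k, 1 * (σ' p).count (Sum.inr i) :=
          Finset.sum_le_sum (fun p _ => Nat.mul_le_mul_right _ (hσc p))
      _ = ∑ p : Fin k, (σ' p).count (Sum.inr i) := by simp
      _ ≤ 1 := hσ'c i
  have hcnt : ∀ (ℓ : Fin l) (i0 : Fin n), (compU σ σ' ℓ).count (Sum.inr i0) ≤ 1 := by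
    intro ℓ i0
    exact le_trans (Finset.single_le_sum
      (f := fun ℓ : Fin l => (compU σ σ' ℓ).count (Sum.inr i0))
      (fun _ _ => Nat.zero_le _) (Finset.mem_univ ℓ)) (hcl i0)
  have hdec : ∀ (ℓ : Fin l) (i : Fin n), Sum.inr i ∈ compU σ σ' ℓ →
      ∃ p : Fin k, Sum.inr p ∈ σ ℓ ∧ Sum.inr i ∈ σ' p := by
    intro ℓ i h
    rw [hcompU] at h
    obtain ⟨x, hx, hix⟩ := List.mem_flatMap.mp h
    obtain ⟨p, rfl, hip⟩ := mem_expand hix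
    exact ⟨p, hx, hip⟩
  have hmon : MonotoneUpd (compU σ σ') := by
    intro i j hij ℓi ℓj hi hj
    obtain ⟨p, hp, hip⟩ := hdec ℓi i hi
    obtain ⟨q, hq, hjq⟩ := hdec ℓj j hj
    rcases hσ'm i j hij p q hip hjq with hpq | ⟨rfl, hidx⟩
    · -- p < q in Fin k
      rcases hσm p q (le_of_lt hpq) ℓi ℓj hp hq with h | ⟨heq, hle⟩
      · exact Or.inl h
      · subst heq
        right
        refine ⟨rfl, ?_⟩
        have hci := hcnt ℓi i
        have hcj := hcnt ℓi j
        rw [hcompU] at hci hcj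
        rw [e1] at hci hcj
        rw [e2] at hle
        have hne : @List.idxOf _ instBEqOfDecidableEq (Sum.inr p) (σ ℓi)
            ≠ @List.idxOf _ instBEqOfDecidableEq (Sum.inr q) (σ ℓi) := by
          intro hh
          exact absurd (Sum.inr.inj ((@List.idxOf_inj _ instBEqOfDecidableEq _ _ _ _ hp).mp hh)) (ne_of_lt hpq)
        have key := idxOf_flatMap_le (expand σ') (Sum.inr i) (Sum.inr j) (σ ℓi) hci hcj
          (Sum.inr p) (Sum.inr q) hp hq
          (show Sum.inr i ∈ expand σ' (Sum.inr p) from hip)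
          (show Sum.inr j ∈ expand σ' (Sum.inr q) from hjq)
          (Or.inl (lt_of_le_of_ne hle hne))
        rw [hcompU]
        rw [e1]
        exact key
    · -- p = q
      have hll : ℓi = ℓj := by
        by_contra hne
        have h1 : 1 ≤ (σ ℓi).count (Sum.inr p) := List.count_pos_iff.mpr hp
        have h2 : 1 ≤ (σ ℓj).count (Sum.inr p) := List.count_pos_iff.mpr hq
        have hsums := Finset.sum_le_sum_of_subset
          (Finset.subset_univ ({ℓi, ℓj} : Finset (Fin l)))
          (f := fun ℓ => (σ ℓ).count (Sum.inr p))
        rw [Finset.sum_pair hne] at hsums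
        have hsums' : (σ ℓi).count (Sum.inr p) + (σ ℓj).count (Sum.inr p)
            ≤ ∑ ℓ : Fin l, (σ ℓ).count (Sum.inr p) := hsums
        have htot := hσc p
        omega
      subst hll
      right
      refine ⟨rfl, ?_⟩
      have hci := hcnt ℓi i
      have hcj := hcnt ℓi j
      rw [hcompU] at hci hcj
      rw [e1] at hci hcj
      rw [e1] at hidx
      have key := idxOf_flatMap_le (expand σ') (Sum.inr i) (Sum.inr j) (σ ℓi) hci hcj
        (Sum.inr p) (Sum.inr p) hp hq
        (show Sum.inr i ∈ expand σ' (Sum.inr p) from hip)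
        (show Sum.inr j ∈ expand σ' (Sum.inr p) from hjq)
        (Or.inr ⟨rfl, hidx⟩)
      rw [hcompU]
      rw [e1]
      exact key
  refine ⟨⟨hcl, hmon⟩, ?_, ?_, ?_⟩
  · intro τ τ' τ''
    funext j
    show ((τ j).flatMap (expand τ')).flatMap (expand τ'')
        = (τ j).flatMap (expand (compU τ' τ''))
    rw [List.flatMap_assoc]
    refine congrArg (fun f => List.flatMap f (τ j)) (funext fun x => ?_)
    cases x with
    | inl a => simp [expand]
    | inr i => rfl
  · funext j
    show (σ j).flatMap (expand (idU Γ k)) = σ j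
    have hfe : expand (idU Γ k) = fun x => [x] := funext (fun x => by cases x <;> rfl)
    rw [hfe, List.flatMap_singleton']
  · funext j
    show List.flatMap (expand σ) [Sum.inr j] = σ j
    rw [List.flatMap_singleton]
    rfl
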